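/- In ℝ^d with Euclidean distance, for any finite point set S and any point x, changing a single point of S can change the K-nearest-neighbor-distance-based count Σ_{y ∈ S} 𝟙{R_{S}(y) ≥ r} by at most K γ_d, where R_S(y) is the distance from y to its K-th nearest neighbor in S \ {y} and γ_d is the minimal number of cones of angle π/6 centered at the origin needed to cover ℝ^d. Specifically: any fixed point z can be among the K nearest neighbors of at most Kγ_d points of S. -/

import Mathlib

open Set Real

open Set Real MeasureTheory
open scoped ENNReal
open scoped RealInnerProductSpace

namespace KNNAux

variable {E : Type*} [NormedAddCommGroup E] [InnerProductSpace ℝ E]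

lemma key_inner {v v' w : E} (hv : ‖v‖ = 1) (hv' : ‖v'‖ = 1) (hw : ‖w‖ = 1)
    (h1 : Real.sqrt 3 / 2 < ⟪v, w⟫) (h2 : Real.sqrt 3 / 2 < ⟪v', w⟫) :
    1 / 2 < ⟪v, v'⟫ := by
  have h3 : (0:ℝ) < Real.sqrt 3 / 2 := by positivity
  have hsq : Real.sqrt 3 ^ 2 = 3 := Real.sq_sqrt (by norm_num)
  set α := ⟪v, w⟫ with hα
  set β := ⟪v', w⟫ with hβ
  have hc : (Real.sqrt 3 / 2) * (Real.sqrt 3 / 2) = 3 / 4 := by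
    rw [div_mul_div_comm, ← sq, hsq]; norm_num
  have hαβ : 3 / 4 < α * β := by
    rw [← hc]; exact mul_lt_mul'' h1 h2 (le_of_lt h3) (le_of_lt h3)
  have hww : ⟪w, w⟫ = 1 := by
    rw [real_inner_self_eq_norm_sq, hw]; norm_num
  have hP : ⟪v - α • w, v' - β • w⟫ = ⟪v, v'⟫ - α * β := by
    have h4 : ⟪w, v'⟫ = β := by rw [hβ, real_inner_comm]
    have h5 : ⟪v, w⟫ = α := hα.symm
    simp only [inner_sub_left, inner_sub_right, real_inner_smul_left,
      real_inner_smul_right, hww, h4, h5]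
    ring
  have hnP : ‖v - α • w‖ ^ 2 = 1 - α ^ 2 := by
    rw [norm_sub_sq_real, real_inner_smul_right, norm_smul, hv, hw, ← hα]
    simp [Real.norm_eq_abs, sq_abs]
    ring
  have hnQ : ‖v' - β • w‖ ^ 2 = 1 - β ^ 2 := by
    rw [norm_sub_sq_real, real_inner_smul_right, norm_smul, hv', hw, ← hβ]
    simp [Real.norm_eq_abs, sq_abs]
    ring
  have hα2 : 3/4 < α ^ 2 := by
    have h := pow_lt_pow_left₀ h1 (le_of_lt h3) (by norm_num : 2 ≠ 0)
    rw [div_pow, hsq] at h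
    calc (3:ℝ)/4 = 3/2^2 := by norm_num
      _ < α ^ 2 := h
  have hβ2 : 3/4 < β ^ 2 := by
    have h := pow_lt_pow_left₀ h2 (le_of_lt h3) (by norm_num : 2 ≠ 0)
    rw [div_pow, hsq] at h
    calc (3:ℝ)/4 = 3/2^2 := by norm_num
      _ < β ^ 2 := h
  have hPn : ‖v - α • w‖ ≤ 1/2 := by
    nlinarith [norm_nonneg (v - α • w)]
  have hQn : ‖v' - β • w‖ ≤ 1/2 := by
    nlinarith [norm_nonneg (v' - β • w)]
  have habs : |⟪v - α • w, v' - β • w⟫| ≤ 1/4 := by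
    have h1' := abs_real_inner_le_norm (v - α • w) (v' - β • w)
    have h2' : ‖v - α • w‖ * ‖v' - β • w‖ ≤ 1/4 := by
      calc ‖v - α • w‖ * ‖v' - β • w‖ ≤ (1/2) * (1/2) :=
            mul_le_mul hPn hQn (norm_nonneg _) (by norm_num)
        _ = 1/4 := by norm_num
    linarith
  have := abs_le.mp habs
  nlinarith [hP]

lemma closer {y x z : E} (hy : y ≠ z) (hx : x ≠ z)
    (hr : dist x z ≤ dist y z)
    (hA : 1/2 < ⟪‖y - z‖⁻¹ • (y - z), ‖x - z‖⁻¹ • (x - z)⟫) :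
    dist y x < dist y z := by
  set a := y - z with ha
  set b := x - z with hb
  have hA0 : 0 < ‖a‖ := by simpa [ha, sub_eq_zero] using hy
  have hB0 : 0 < ‖b‖ := by simpa [hb, sub_eq_zero] using hx
  have hr' : ‖b‖ ≤ ‖a‖ := by simpa [dist_eq_norm, ha, hb] using hr
  have hinner : ‖a‖ * ‖b‖ / 2 < ⟪a, b⟫ := by
    have h := hA
    rw [real_inner_smul_left, real_inner_smul_right] at h
    have h2 : 1/2 * (‖a‖ * ‖b‖) < ‖a‖⁻¹ * (‖b‖⁻¹ * ⟪a, b⟫) * (‖a‖ * ‖b‖) :=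
      mul_lt_mul_of_pos_right h (by positivity)
    have h3 : ‖a‖⁻¹ * (‖b‖⁻¹ * ⟪a, b⟫) * (‖a‖ * ‖b‖) = ⟪a, b⟫ := by
      field_simp
    linarith
  have hdyx : dist y x = ‖a - b‖ := by
    rw [dist_eq_norm, ha, hb]; congr 1; abel
  have hexp : ‖a - b‖ ^ 2 = ‖a‖ ^ 2 - 2 * ⟪a, b⟫ + ‖b‖ ^ 2 := by
    rw [norm_sub_sq_real]
  have hsq : ‖a - b‖ ^ 2 < ‖a‖ ^ 2 := by nlinarith
  have hfin : dist y x < ‖a‖ := by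
    rw [hdyx]
    exact lt_of_pow_lt_pow_left₀ 2 (le_of_lt hA0) hsq
  simpa [dist_eq_norm, ha] using hfin

namespace Meas

variable (d : ℕ)

def Cc (v : EuclideanSpace ℝ (Fin d)) : Set (EuclideanSpace ℝ (Fin d)) :=
  {w | Real.sqrt 3 / 2 * ‖w‖ ≤ ⟪v, w⟫} ∩ Metric.ball 0 1

def Oc (v : EuclideanSpace ℝ (Fin d)) : Set (EuclideanSpace ℝ (Fin d)) :=
  {w | Real.sqrt 3 / 2 * ‖w‖ < ⟪v, w⟫} ∩ Metric.ball 0 1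

variable {d}

lemma sqrt3_lt_two : Real.sqrt 3 < 2 := by
  nlinarith [Real.sq_sqrt (show (0:ℝ) ≤ 3 by norm_num), Real.sqrt_nonneg 3]

lemma sqrt3_pos : (0:ℝ) < Real.sqrt 3 := Real.sqrt_pos.mpr (by norm_num)

lemma isOpen_Oc (v : EuclideanSpace ℝ (Fin d)) : IsOpen (Oc d v) := by
  apply IsOpen.inter _ Metric.isOpen_ball
  exact isOpen_lt (by fun_prop) (Continuous.inner continuous_const continuous_id)

lemma measurable_Cc (v : EuclideanSpace ℝ (Fin d)) : MeasurableSet (Cc d v) := by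
  apply MeasurableSet.inter _ Metric.isOpen_ball.measurableSet
  apply IsClosed.measurableSet
  exact isClosed_le (by fun_prop) (Continuous.inner continuous_const continuous_id)

lemma convex_cone (v : EuclideanSpace ℝ (Fin d)) :
    Convex ℝ {w : EuclideanSpace ℝ (Fin d) | Real.sqrt 3 / 2 * ‖w‖ ≤ ⟪v, w⟫} := by
  intro w₁ hw₁ w₂ hw₂ s t hs ht hst
  simp only [Set.mem_setOf_eq] at *
  have hn : ‖s • w₁ + t • w₂‖ ≤ s * ‖w₁‖ + t * ‖w₂‖ := by
    calc ‖s • w₁ + t • w₂‖ ≤ ‖s • w₁‖ + ‖t • w₂‖ := norm_add_le _ _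
      _ = s * ‖w₁‖ + t * ‖w₂‖ := by
          rw [norm_smul, norm_smul, Real.norm_eq_abs, Real.norm_eq_abs,
            abs_of_nonneg hs, abs_of_nonneg ht]
  have hi : ⟪v, s • w₁ + t • w₂⟫ = s * ⟪v, w₁⟫ + t * ⟪v, w₂⟫ := by
    rw [inner_add_right, real_inner_smul_right, real_inner_smul_right]
  rw [hi]
  have hc : (0:ℝ) ≤ Real.sqrt 3 / 2 := by positivity
  nlinarith [mul_le_mul_of_nonneg_left hw₁ hs, mul_le_mul_of_nonneg_left hw₂ ht]

lemma measure_Cc_eq_Oc (v : EuclideanSpace ℝ (Fin d)) (hv : ‖v‖ = 1) :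
    volume (Cc d v) = volume (Oc d v) := by
  have hsub : Oc d v ⊆ Cc d v := by
    rintro w ⟨h1, h2⟩
    refine ⟨?_, h2⟩
    simp only [Set.mem_setOf_eq] at h1 ⊢
    exact le_of_lt h1
  have hdiff : Cc d v \ Oc d v ⊆
      frontier {w : EuclideanSpace ℝ (Fin d) | Real.sqrt 3 / 2 * ‖w‖ ≤ ⟪v, w⟫} := by
    intro w hw
    obtain ⟨⟨hw1, hw2⟩, hw3⟩ := hw
    have heq : Real.sqrt 3 / 2 * ‖w‖ = ⟪v, w⟫ := by
      by_contra hne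
      exact hw3 ⟨lt_of_le_of_ne hw1 hne, hw2⟩
    constructor
    · exact subset_closure hw1
    · -- not interior
      intro hint
      rw [mem_interior_iff_mem_nhds, Metric.mem_nhds_iff] at hint
      obtain ⟨ε, hε, hball⟩ := hint
      have hmem : w - (ε/2) • v ∈ Metric.ball w ε := by
        rw [Metric.mem_ball, dist_eq_norm]
        have : w - (ε/2) • v - w = -((ε/2) • v) := by abel
        rw [this, norm_neg, norm_smul, Real.norm_eq_abs, abs_of_nonneg (by linarith), hv]
        linarith
      have hmem2 := hball hmem
      simp only [Set.mem_setOf_eq] at hmem2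
      have hiv : ⟪v, w - (ε/2) • v⟫ = ⟪v, w⟫ - ε/2 := by
        rw [inner_sub_right, real_inner_smul_right, real_inner_self_eq_norm_sq, hv]
        ring
      have hnv : ‖w‖ - ε/2 ≤ ‖w - (ε/2) • v‖ := by
        have h1 : ‖w‖ ≤ ‖w - (ε/2) • v‖ + ‖(ε/2) • v‖ := by
          calc ‖w‖ = ‖w - (ε/2) • v + (ε/2) • v‖ := by congr 1; abel
            _ ≤ _ := norm_add_le _ _
        rw [norm_smul, Real.norm_eq_abs, abs_of_nonneg (by linarith), hv] at h1
        linarith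
      rw [hiv] at hmem2
      have hc1 : Real.sqrt 3 / 2 < 1 := by
        have := sqrt3_lt_two; linarith
      have hc0 : (0:ℝ) < Real.sqrt 3 / 2 := by positivity
      have hx := mul_le_mul_of_nonneg_left hnv (le_of_lt hc0)
      nlinarith [hx, hmem2, heq, hε, hc1]
  have hnull : volume (Cc d v \ Oc d v) = 0 :=
    measure_mono_null hdiff ((convex_cone v).addHaar_frontier volume)
  apply le_antisymm
  · have hs2 : Cc d v ⊆ (Cc d v \ Oc d v) ∪ Oc d v := by
      rw [Set.diff_union_self]
      exact Set.subset_union_left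
    calc volume (Cc d v) ≤ volume ((Cc d v \ Oc d v) ∪ Oc d v) := measure_mono hs2
      _ ≤ volume (Cc d v \ Oc d v) + volume (Oc d v) := measure_union_le _ _
      _ = volume (Oc d v) := by rw [hnull, zero_add]
  · exact measure_mono hsub

lemma measure_Cc_congr (v v' : EuclideanSpace ℝ (Fin d)) (hv : ‖v‖ = 1) (hv' : ‖v'‖ = 1) :
    volume (Cc d v) = volume (Cc d v') := by
  rcases eq_or_ne v v' with rfl | hne
  · rfl
  · set R := Submodule.reflection (ℝ ∙ (v - v'))ᗮ with hR
    have hRv : R v = v' := Submodule.reflection_sub (hv.trans hv'.symm)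
    have hpre : R ⁻¹' (Cc d v') = Cc d v := by
      ext w
      simp only [Cc, Set.mem_preimage, Set.mem_inter_iff, Set.mem_setOf_eq,
        Metric.mem_ball]
      rw [LinearIsometryEquiv.norm_map]
      constructor
      · rintro ⟨h1, h2⟩
        refine ⟨?_, ?_⟩
        · have : ⟪v', R w⟫ = ⟪v, w⟫ := by
            rw [← hRv, LinearIsometryEquiv.inner_map_map]
          rwa [this] at h1
        · simpa [dist_eq_norm] using h2
      · rintro ⟨h1, h2⟩
        refine ⟨?_, ?_⟩
        · have : ⟪v', R w⟫ = ⟪v, w⟫ := by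
            rw [← hRv, LinearIsometryEquiv.inner_map_map]
          rwa [this]
        · simpa [dist_eq_norm] using h2
    calc volume (Cc d v) = volume (R ⁻¹' (Cc d v')) := by rw [hpre]
      _ = volume (Cc d v') :=
        (R.measurePreserving).measure_preimage (measurable_Cc v').nullMeasurableSet

lemma measure_Oc_pos (v : EuclideanSpace ℝ (Fin d)) (hv : ‖v‖ = 1) :
    0 < volume (Oc d v) := by
  set c := Real.sqrt 3 / 2 with hc
  have hc1 : c < 1 := by have := sqrt3_lt_two; rw [hc]; linarith
  have hc0 : 0 < c := by rw [hc]; positivity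
  set ρ := (1 - c)/4 with hρ
  have hρ0 : 0 < ρ := by rw [hρ]; linarith
  have hsub : Metric.ball ((1/2 : ℝ) • v) ρ ⊆ Oc d v := by
    intro w hw
    rw [Metric.mem_ball, dist_eq_norm] at hw
    have hiv : ⟪v, w⟫ = ⟪v, w - (1/2 : ℝ) • v⟫ + 1/2 := by
      rw [inner_sub_right, real_inner_smul_right, real_inner_self_eq_norm_sq, hv]
      ring
    have hlow : -‖w - (1/2 : ℝ) • v‖ ≤ ⟪v, w - (1/2 : ℝ) • v⟫ := by
      have h := abs_real_inner_le_norm v (w - (1/2 : ℝ) • v)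
      rw [hv, one_mul] at h
      have := abs_le.mp h
      linarith [this.1]
    have hup : ‖w‖ ≤ ‖w - (1/2 : ℝ) • v‖ + 1/2 := by
      have h1 : ‖w‖ ≤ ‖w - (1/2:ℝ) • v‖ + ‖(1/2:ℝ) • v‖ := by
        calc ‖w‖ = ‖w - (1/2:ℝ) • v + (1/2:ℝ) • v‖ := by congr 1; abel
          _ ≤ _ := norm_add_le _ _
      rw [norm_smul, Real.norm_eq_abs, hv,
        abs_of_nonneg (by norm_num : (0:ℝ) ≤ 1/2), mul_one] at h1
      linarith
    constructor
    · simp only [Set.mem_setOf_eq]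
      nlinarith
    · rw [Metric.mem_ball, dist_eq_norm, sub_zero]
      nlinarith
  calc (0:ℝ≥0∞) < volume (Metric.ball ((1/2 : ℝ) • v) ρ) := Metric.measure_ball_pos _ _ hρ0
    _ ≤ volume (Oc d v) := measure_mono hsub

lemma packing (γd : ℕ) (u : Fin γd → EuclideanSpace ℝ (Fin d))
    (hu : ∀ i, ‖u i‖ = 1)
    (hcov : ∀ w : EuclideanSpace ℝ (Fin d),
      ∃ i, Real.sqrt 3 / 2 * ‖w‖ ≤ ⟪u i, w⟫)
    (i₀ : Fin γd)
    (T : Finset (EuclideanSpace ℝ (Fin d))) (hT1 : ∀ v ∈ T, ‖v‖ = 1)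
    (hT2 : ∀ v ∈ T, ∀ v' ∈ T, v ≠ v' → ⟪v, v'⟫ ≤ 1/2) : T.card ≤ γd := by
  set a := volume (Cc d (u i₀)) with ha
  have haO : ∀ v : EuclideanSpace ℝ (Fin d), ‖v‖ = 1 → volume (Oc d v) = a := by
    intro v hv
    rw [← measure_Cc_eq_Oc v hv, ha]
    exact measure_Cc_congr v (u i₀) hv (hu i₀)
  have ha0 : a ≠ 0 := by
    have := measure_Oc_pos (u i₀) (hu i₀)
    rw [haO (u i₀) (hu i₀)] at this
    exact this.ne'
  have hafin : a ≠ ⊤ := by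
    have h1 : a ≤ volume (Metric.ball (0 : EuclideanSpace ℝ (Fin d)) 1) :=
      measure_mono (fun w hw => hw.2)
    exact ne_top_of_le_ne_top measure_ball_lt_top.ne h1
  -- disjointness
  have hdisj : (T : Set (EuclideanSpace ℝ (Fin d))).PairwiseDisjoint (Oc d) := by
    intro v hv v' hv' hne
    rw [Function.onFun, Set.disjoint_left]
    intro w hwv hwv'
    have hw0 : w ≠ 0 := by
      intro h
      rw [h] at hwv
      have := hwv.1
      simp at this
    have hwn : 0 < ‖w‖ := norm_pos_iff.mpr hw0
    set wh := ‖w‖⁻¹ • w with hwh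
    have hwhn : ‖wh‖ = 1 := by
      rw [hwh, norm_smul, Real.norm_eq_abs, abs_of_nonneg (by positivity)]
      field_simp
    have hkey : ∀ v₁ : EuclideanSpace ℝ (Fin d), w ∈ Oc d v₁ →
        Real.sqrt 3 / 2 < ⟪v₁, wh⟫ := by
      intro v₁ hmem
      have h1 := hmem.1
      simp only [Set.mem_setOf_eq] at h1
      rw [hwh, real_inner_smul_right]
      calc Real.sqrt 3 / 2 = (Real.sqrt 3 / 2 * ‖w‖) * ‖w‖⁻¹ := by
            field_simp
        _ < ⟪v₁, w⟫ * ‖w‖⁻¹ := by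
            apply mul_lt_mul_of_pos_right h1 (by positivity)
        _ = ‖w‖⁻¹ * ⟪v₁, w⟫ := by ring
    have h12 := key_inner (hT1 v hv) (hT1 v' hv') hwhn (hkey v hwv) (hkey v' hwv')
    exact absurd (hT2 v hv v' hv' hne) (not_le.mpr h12)
  have hsum : ∑ v ∈ T, volume (Oc d v) = volume (⋃ v ∈ T, Oc d v) :=
    (measure_biUnion_finset hdisj (fun v _ => (isOpen_Oc v).measurableSet)).symm
  have hsub : (⋃ v ∈ T, Oc d v) ⊆ Metric.ball (0 : EuclideanSpace ℝ (Fin d)) 1 := by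
    intro w hw
    simp only [Set.mem_iUnion] at hw
    obtain ⟨v, _, hv⟩ := hw
    exact hv.2
  have hcover : Metric.ball (0 : EuclideanSpace ℝ (Fin d)) 1 ⊆ ⋃ i, Cc d (u i) := by
    intro w hw
    obtain ⟨i, hi⟩ := hcov w
    exact Set.mem_iUnion.mpr ⟨i, hi, hw⟩
  have hchain : (T.card : ℝ≥0∞) * a ≤ (γd : ℝ≥0∞) * a := by
    calc (T.card : ℝ≥0∞) * a = ∑ v ∈ T, volume (Oc d v) := by
          rw [Finset.sum_congr rfl (fun v hv => haO v (hT1 v hv)), Finset.sum_const,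
            nsmul_eq_mul]
      _ = volume (⋃ v ∈ T, Oc d v) := hsum
      _ ≤ volume (Metric.ball (0 : EuclideanSpace ℝ (Fin d)) 1) := measure_mono hsub
      _ ≤ volume (⋃ i, Cc d (u i)) := measure_mono hcover
      _ ≤ ∑ i : Fin γd, volume (Cc d (u i)) := by
          exact measure_iUnion_fintype_le _ _
      _ = (γd : ℝ≥0∞) * a := by
          rw [Finset.sum_congr rfl
            (fun i _ => measure_Cc_congr (u i) (u i₀) (hu i) (hu i₀)), Finset.sum_const]
          simp [mul_comm]
          rfl
  have := (ENNReal.mul_le_mul_iff_left ha0 hafin).mp hchain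
  exact_mod_cast this

end Meas
end KNNAux

namespace KNNAux

lemma exists_coloring {α : Type*} [DecidableEq α] (K : ℕ) (hK : 1 ≤ K)
    (r : α → ℝ) (Adj : α → α → Prop) [DecidableRel Adj]
    (hsymm : ∀ y x, Adj y x → Adj x y) :
    ∀ B : Finset α,
      (∀ y ∈ B, ((B.erase y).filter (fun x => r x ≤ r y ∧ Adj y x)).card < K) →
      ∃ φ : α → Fin K, ∀ y ∈ B, ∀ x ∈ B, y ≠ x → φ y = φ x → ¬ Adj y x := by
  intro B
  induction B using Finset.strongInduction with
  | _ B ih =>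
    intro hdeg
    rcases B.eq_empty_or_nonempty with rfl | hne
    · exact ⟨fun _ => ⟨0, hK⟩, by simp⟩
    · obtain ⟨y₀, hy₀, hmax⟩ := B.exists_max_image r hne
      have hdeg' : ∀ y ∈ B.erase y₀,
          (((B.erase y₀).erase y).filter (fun x => r x ≤ r y ∧ Adj y x)).card < K := by
        intro y hy
        refine lt_of_le_of_lt (Finset.card_le_card ?_) (hdeg y (Finset.mem_of_mem_erase hy))
        intro x hx
        simp only [Finset.mem_filter, Finset.mem_erase] at hx ⊢
        exact ⟨⟨hx.1.1, hx.1.2.2⟩, hx.2⟩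
      obtain ⟨φ, hφ⟩ := ih (B.erase y₀) (Finset.erase_ssubset hy₀) hdeg'
      set N := (B.erase y₀).filter (fun x => Adj y₀ x) with hNdef
      have hNcard : N.card < K := by
        refine lt_of_le_of_lt (Finset.card_le_card ?_) (hdeg y₀ hy₀)
        intro x hx
        simp only [hNdef, Finset.mem_filter, Finset.mem_erase] at hx ⊢
        exact ⟨hx.1, hmax x hx.1.2, hx.2⟩
      have hexk : ∃ k : Fin K, k ∉ N.image φ := by
        by_contra h
        push_neg at h
        have hsub : (Finset.univ : Finset (Fin K)) ⊆ N.image φ := fun k _ => h k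
        have h2 := Finset.card_le_card hsub
        have h3 : (N.image φ).card ≤ N.card := Finset.card_image_le
        simp only [Finset.card_univ, Fintype.card_fin] at h2
        omega
      obtain ⟨k, hk⟩ := hexk
      refine ⟨Function.update φ y₀ k, ?_⟩
      intro y hy x hx hyx hcol
      rcases eq_or_ne y y₀ with rfl | hyy₀
      · have hx' : x ∈ B.erase y := Finset.mem_erase.mpr ⟨fun h => hyx h.symm, hx⟩
        rw [Function.update_self, Function.update_of_ne (Finset.ne_of_mem_erase hx')] at hcol
        intro hA
        have hxN : x ∈ N := Finset.mem_filter.mpr ⟨hx', hA⟩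
        exact hk (Finset.mem_image.mpr ⟨x, hxN, hcol.symm⟩)
      · rcases eq_or_ne x y₀ with rfl | hxy₀
        · have hy' : y ∈ B.erase x := Finset.mem_erase.mpr ⟨hyy₀, hy⟩
          rw [Function.update_self, Function.update_of_ne hyy₀] at hcol
          intro hA
          have hyN : y ∈ N := Finset.mem_filter.mpr ⟨hy', hsymm y x hA⟩
          exact hk (Finset.mem_image.mpr ⟨y, hyN, hcol⟩)
        · rw [Function.update_of_ne hyy₀, Function.update_of_ne hxy₀] at hcol
          exact hφ y (Finset.mem_erase.mpr ⟨hyy₀, hy⟩) x (Finset.mem_erase.mpr ⟨hxy₀, hx⟩)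
            hyx hcol

end KNNAux


/-- In `ℝ^d`, if `γd` cones of half-angle `π/6` with apex at the
origin cover `ℝ^d`, then any fixed point `z` can be among the `K` nearest
neighbors (in Euclidean distance) of at most `K γd` points of a finite set `S`;
here "`z` is among the `K` nearest neighbors of `y`" means fewer than `K` points
of `S \ {y}` are strictly closer to `y` than `z` is. -/
theorem knn_in_degree_bound
    (d : ℕ) (γd K : ℕ) (hK : 1 ≤ K)
    (u : Fin γd → EuclideanSpace ℝ (Fin d)) (hu : ∀ i, ‖u i‖ = 1)
    (hcover : ∀ w : EuclideanSpace ℝ (Fin d),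
      ∃ i, Real.cos (π / 6) * ‖w‖ ≤ inner ℝ (u i) w)
    (S : Finset (EuclideanSpace ℝ (Fin d))) (z : EuclideanSpace ℝ (Fin d))
    (hz : z ∈ S) :
    {y ∈ (S : Set (EuclideanSpace ℝ (Fin d))) | y ≠ z ∧
        ({x ∈ (S : Set (EuclideanSpace ℝ (Fin d))) | x ≠ y ∧
            dist y x < dist y z}.ncard < K)}.ncard ≤ K * γd := by
  classical
  obtain ⟨i₀, -⟩ := hcover 0
  have hcov' : ∀ w : EuclideanSpace ℝ (Fin d),
      ∃ i, Real.sqrt 3 / 2 * ‖w‖ ≤ ⟪u i, w⟫ := by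
    intro w
    obtain ⟨i, hi⟩ := hcover w
    exact ⟨i, by rwa [Real.cos_pi_div_six] at hi⟩
  set ud : EuclideanSpace ℝ (Fin d) → EuclideanSpace ℝ (Fin d) :=
    fun y => ‖y - z‖⁻¹ • (y - z) with hud
  set Adj : EuclideanSpace ℝ (Fin d) → EuclideanSpace ℝ (Fin d) → Prop :=
    fun y x => 1/2 < ⟪ud y, ud x⟫ with hAdj
  have hAdj' : ∀ y x, Adj y x ↔ 1/2 < ⟪ud y, ud x⟫ := fun y x => Iff.rfl
  have hsymm : ∀ y x, Adj y x → Adj x y := by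
    intro y x h
    rw [hAdj'] at h ⊢
    rwa [real_inner_comm]
  have hinner_eq : ∀ y : EuclideanSpace ℝ (Fin d),
      {x | x ∈ S ∧ x ≠ y ∧ dist y x < dist y z}.ncard
        = (S.filter (fun x => x ≠ y ∧ dist y x < dist y z)).card := by
    intro y
    rw [← Set.ncard_coe_finset]
    apply congrArg Set.ncard
    ext x
    simp [Finset.coe_filter]
  have houter : {y ∈ (S : Set (EuclideanSpace ℝ (Fin d))) | y ≠ z ∧
        ({x ∈ (S : Set (EuclideanSpace ℝ (Fin d))) | x ≠ y ∧
            dist y x < dist y z}.ncard < K)}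
      = ↑(S.filter (fun y => y ≠ z ∧
          (S.filter (fun x => x ≠ y ∧ dist y x < dist y z)).card < K)) := by
    ext y
    simp only [Finset.coe_filter, Set.mem_setOf_eq, Finset.mem_coe, hinner_eq]
  rw [houter, Set.ncard_coe_finset]
  set B : Finset (EuclideanSpace ℝ (Fin d)) := S.filter (fun y => y ≠ z ∧
      (S.filter (fun x => x ≠ y ∧ dist y x < dist y z)).card < K) with hB
  have hdeg : ∀ y ∈ B,
      ((B.erase y).filter (fun x => dist x z ≤ dist y z ∧ Adj y x)).card < K := by
    intro y hy
    obtain ⟨hyS, hyz, hycard⟩ := Finset.mem_filter.mp hy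
    refine lt_of_le_of_lt (Finset.card_le_card ?_) hycard
    intro x hx
    simp only [Finset.mem_filter, Finset.mem_erase] at hx
    obtain ⟨⟨hxy, hxB⟩, hxd, hxA⟩ := hx
    obtain ⟨hxS, hxz, -⟩ := Finset.mem_filter.mp hxB
    refine Finset.mem_filter.mpr ⟨hxS, hxy, ?_⟩
    have hxA' : 1/2 < ⟪ud y, ud x⟫ := (hAdj' y x).mp hxA
    exact KNNAux.closer hyz hxz hxd hxA'
  obtain ⟨φ, hφ⟩ := KNNAux.exists_coloring K hK (fun y => dist y z) Adj hsymm B hdeg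
  have hfiber : ∀ k : Fin K, (B.filter (fun y => φ y = k)).card ≤ γd := by
    intro k
    set Bk := B.filter (fun y => φ y = k) with hBk
    have hBkz : ∀ y ∈ Bk, y ≠ z := by
      intro y hy
      exact ((Finset.mem_filter.mp (Finset.mem_filter.mp hy).1).2).1
    have hBknorm : ∀ y ∈ Bk, ‖ud y‖ = 1 := by
      intro y hy
      have hne : y - z ≠ 0 := sub_ne_zero.mpr (hBkz y hy)
      have : ud y = ‖y - z‖⁻¹ • (y - z) := rfl
      rw [this, norm_smul, Real.norm_eq_abs, abs_of_nonneg (by positivity)]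
      field_simp
    have hnadj : ∀ y ∈ Bk, ∀ x ∈ Bk, y ≠ x → ¬ Adj y x := by
      intro y hy x hx hyx
      exact hφ y (Finset.mem_filter.mp hy).1 x (Finset.mem_filter.mp hx).1 hyx
        (((Finset.mem_filter.mp hy).2).trans ((Finset.mem_filter.mp hx).2).symm)
    have hinj : Set.InjOn ud Bk := by
      intro y hy x hx heq
      by_contra hne
      have hA : Adj y x := by
        rw [hAdj' y x, heq]
        have hx1 : ‖ud x‖ = 1 := hBknorm x hx
        rw [real_inner_self_eq_norm_sq, hx1]
        norm_num
      exact hnadj y hy x hx hne hA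
    have hcard : Bk.card = (Bk.image ud).card := (Finset.card_image_of_injOn hinj).symm
    rw [hcard]
    apply KNNAux.Meas.packing γd u hu hcov' i₀
    · intro v hv
      obtain ⟨y, hy, rfl⟩ := Finset.mem_image.mp hv
      exact hBknorm y hy
    · intro v hv v' hv' hne
      obtain ⟨y, hy, rfl⟩ := Finset.mem_image.mp hv
      obtain ⟨y', hy', rfl⟩ := Finset.mem_image.mp hv'
      have hyy' : y ≠ y' := fun h => hne (by rw [h])
      have hN := hnadj y hy y' hy' hyy'
      rw [hAdj'] at hN
      exact le_of_not_gt hN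
  calc B.card = ∑ k : Fin K, (B.filter (fun y => φ y = k)).card :=
        Finset.card_eq_sum_card_fiberwise (fun y _ => Finset.mem_univ (φ y))
    _ ≤ ∑ _k : Fin K, γd := Finset.sum_le_sum (fun k _ => hfiber k)
    _ = K * γd := by simp [Finset.sum_const, Finset.card_univ]
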